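/- Fix σ_z > 0, μ_z < 0 with |μ_z| sufficiently large, ϑ < 0, δ > 0, and γ̃ ∈ (-1,0). Let Q be as above with positive root λ₊ > 1 and Q(-γ̃) < 0. Set A = -δ/(2Q(-γ̃)) > 0, z_∞ = (λ₊/(-ϑ A(λ₊ + γ̃)))^{-1/γ̃}, B = (-γ̃ A/λ₊) z_∞^{-γ̃-λ₊}. Define F̂(z) = -1/ϑ - A z^{-γ̃} + B z^{λ₊} for 0 < z < z_∞ and F̂(z) = 0 for z ≥ z_∞. Then F̂ is C¹ on (0,∞), F̂'(z) < 0 for z ∈ (0, z_∞), F̂ > 0 on (0,z_∞), and F̂ satisfies -L_Z F̂(z) = -(δ/2) z^{-γ̃} + 1 for 0 < z < z_∞, where L_Z f(z) = (σ_z²/2) z² f''(z) + μ_z z f'(z) + ϑ f(z). -/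

import Mathlib

theorem stmt8 (σ μ ϑ δ γt lp A zinf B : ℝ) (Q Fh : ℝ → ℝ)
    (hσ : 0 < σ) (hμ : μ < 0) (hϑ : ϑ < 0) (hδ : 0 < δ)
    (hγ1 : -1 < γt) (hγ2 : γt < 0)
    (hQ : ∀ l, Q l = σ ^ 2 / 2 * l ^ 2 + (μ - σ ^ 2 / 2) * l + ϑ)
    (hlp : 1 < lp) (hroot : Q lp = 0) (hQγ : Q (-γt) < 0)
    (hA : A = -δ / (2 * Q (-γt)))
    (hzinf : zinf = (lp / (-ϑ * A * (lp + γt))) ^ (-(1 / γt)))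
    (hB : B = -γt * A / lp * zinf ^ (-γt - lp))
    (hF : ∀ z : ℝ, Fh z = if z < zinf then -1 / ϑ - A * z ^ (-γt) + B * z ^ lp else 0) :
    0 < A ∧
    ContDiffOn ℝ 1 Fh (Set.Ioi 0) ∧
    (∀ z ∈ Set.Ioo 0 zinf, deriv Fh z < 0) ∧
    (∀ z ∈ Set.Ioo 0 zinf, 0 < Fh z) ∧
    (∀ z ∈ Set.Ioo 0 zinf,
      -(σ ^ 2 / 2 * z ^ 2 * deriv (deriv Fh) z + μ * z * deriv Fh z + ϑ * Fh z)
        = -(δ / 2) * z ^ (-γt) + 1) := by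
  have hγne : γt ≠ 0 := hγ2.ne
  have hϑne : ϑ ≠ 0 := hϑ.ne
  have hQγne : Q (-γt) ≠ 0 := hQγ.ne
  have hlppos : (0:ℝ) < lp := by linarith
  have hlg : 0 < lp + γt := by linarith
  have hApos : 0 < A := by
    rw [hA]; exact div_pos_of_neg_of_neg (by linarith) (by linarith)
  have hX : 0 < lp / (-ϑ * A * (lp + γt)) := by
    have := mul_neg_of_neg_of_pos hϑ (mul_pos hApos hlg)
    exact div_pos hlppos (by nlinarith)
  have hzpos : 0 < zinf := by
    rw [hzinf]; exact Real.rpow_pos_of_pos hX _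
  have hzX : zinf ^ (-γt) = lp / (-ϑ * A * (lp + γt)) := by
    rw [hzinf, ← Real.rpow_mul hX.le,
      show -(1 / γt) * -γt = 1 by field_simp, Real.rpow_one]
  set g : ℝ → ℝ := fun z => -1 / ϑ - A * z ^ (-γt) + B * z ^ lp with hgdef
  set g1 : ℝ → ℝ := fun z => γt * A * z ^ (-γt - 1) + lp * B * z ^ (lp - 1) with hg1def
  set g2 : ℝ → ℝ := fun z => γt * A * ((-γt - 1) * z ^ (-γt - 2))
      + lp * B * ((lp - 1) * z ^ (lp - 2)) with hg2def
  have hgd : ∀ z : ℝ, 0 < z → HasDerivAt g (g1 z) z := by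
    intro z hz
    have h1 : HasDerivAt (fun z : ℝ => z ^ (-γt)) (-γt * z ^ (-γt - 1)) z :=
      Real.hasDerivAt_rpow_const (Or.inl hz.ne')
    have h2 : HasDerivAt (fun z : ℝ => z ^ lp) (lp * z ^ (lp - 1)) z :=
      Real.hasDerivAt_rpow_const (Or.inl hz.ne')
    have := ((hasDerivAt_const z (-1 / ϑ)).sub (h1.const_mul A)).add (h2.const_mul B)
    convert this using 1
    · rfl
    · rfl
    · rfl
    simp only [hg1def]; ring
  have hg1d : ∀ z : ℝ, 0 < z → HasDerivAt g1 (g2 z) z := by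
    intro z hz
    have h1 : HasDerivAt (fun z : ℝ => z ^ (-γt - 1)) ((-γt - 1) * z ^ (-γt - 1 - 1)) z :=
      Real.hasDerivAt_rpow_const (Or.inl hz.ne')
    have h2 : HasDerivAt (fun z : ℝ => z ^ (lp - 1)) ((lp - 1) * z ^ (lp - 1 - 1)) z :=
      Real.hasDerivAt_rpow_const (Or.inl hz.ne')
    have := (h1.const_mul (γt * A)).add (h2.const_mul (lp * B))
    convert this using 1
    · rfl
    · rfl
    · rfl
    simp only [hg2def]
    rw [show -γt - 1 - 1 = -γt - 2 by ring, show lp - 1 - 1 = lp - 2 by ring]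
  have hkey : lp * B * zinf ^ (lp + γt) = -(γt * A) := by
    have h0 : zinf ^ (-γt - lp) * zinf ^ (lp + γt) = 1 := by
      rw [← Real.rpow_add hzpos, show -γt - lp + (lp + γt) = 0 by ring, Real.rpow_zero]
    rw [hB]
    field_simp
    linear_combination -h0
  have hg1z : g1 zinf = 0 := by
    have e : zinf ^ (lp - 1) = zinf ^ (lp + γt) * zinf ^ (-γt - 1) := by
      rw [← Real.rpow_add hzpos, show lp + γt + (-γt - 1) = lp - 1 by ring]
    simp only [hg1def]
    rw [e]
    linear_combination zinf ^ (-γt - 1) * hkey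
  have hgz : g zinf = 0 := by
    have e : zinf ^ lp = zinf ^ (lp + γt) * zinf ^ (-γt) := by
      rw [← Real.rpow_add hzpos, show lp + γt + -γt = lp by ring]
    simp only [hgdef]
    rw [e, hzX]
    have hd : -ϑ * A * (lp + γt) ≠ 0 := by
      have := mul_neg_of_neg_of_pos hϑ (mul_pos hApos hlg)
      intro h; nlinarith
    have hlgne : lp + γt ≠ 0 := hlg.ne'
    field_simp
    linear_combination -hkey
  have hFzinf0 : Fh zinf = 0 := by rw [hF]; simp
  have hFhdIoo : ∀ z ∈ Set.Ioo 0 zinf, HasDerivAt Fh (g1 z) z := by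
    intro z hz
    have hev : Fh =ᶠ[nhds z] g := by
      filter_upwards [Iio_mem_nhds hz.2] with w hw
      rw [hF w, if_pos (Set.mem_Iio.mp hw)]
    exact (hgd z hz.1).congr_of_eventuallyEq hev
  have hFhdIoi : ∀ z : ℝ, zinf < z → HasDerivAt Fh 0 z := by
    intro z hz
    have hev : Fh =ᶠ[nhds z] fun _ => (0:ℝ) := by
      filter_upwards [Ioi_mem_nhds hz] with w hw
      rw [hF w, if_neg (not_lt.2 (le_of_lt (Set.mem_Ioi.mp hw)))]
    exact (hasDerivAt_const z 0).congr_of_eventuallyEq hev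
  have hFhdz : HasDerivAt Fh 0 zinf := by
    have hgd0 : HasDerivAt g 0 zinf := by
      have := hgd zinf hzpos; rwa [hg1z] at this
    rw [hasDerivAt_iff_isLittleO] at hgd0 ⊢
    simp only [smul_zero, sub_zero, hgz, hFzinf0] at hgd0 ⊢
    refine Asymptotics.IsBigO.trans_isLittleO (Asymptotics.isBigO_of_le _ ?_) hgd0
    intro x
    rw [hF x, Real.norm_eq_abs, Real.norm_eq_abs]
    split_ifs with h
    · rfl
    · simp [abs_nonneg]
  have hderivIoo : ∀ z ∈ Set.Ioo 0 zinf, deriv Fh z = g1 z :=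
    fun z hz => (hFhdIoo z hz).deriv
  have hderivmin : ∀ z ∈ Set.Ioi 0, deriv Fh z = g1 (min z zinf) := by
    intro z hz
    rcases lt_trichotomy z zinf with h | h | h
    · rw [min_eq_left h.le]; exact hderivIoo z ⟨hz, h⟩
    · rw [h, min_self, hg1z]; exact hFhdz.deriv
    · rw [min_eq_right h.le, hg1z]; exact (hFhdIoi z h).deriv
  have hdiff : DifferentiableOn ℝ Fh (Set.Ioi 0) := by
    intro z hz
    rcases lt_trichotomy z zinf with h | h | h
    · exact (hFhdIoo z ⟨hz, h⟩).differentiableAt.differentiableWithinAt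
    · exact (h ▸ hFhdz).differentiableAt.differentiableWithinAt
    · exact (hFhdIoi z h).differentiableAt.differentiableWithinAt
  have hcont' : ContinuousOn (deriv Fh) (Set.Ioi 0) := by
    refine ContinuousOn.congr (f := fun z => g1 (min z zinf)) ?_ hderivmin
    intro z hz
    have hm : 0 < min z zinf := lt_min hz hzpos
    have h1 : ContinuousAt (fun w : ℝ => min w zinf) z :=
      (continuous_id.min continuous_const).continuousAt
    exact (ContinuousAt.comp (g := g1) (f := fun w : ℝ => min w zinf) (x := z)
      (hg1d _ hm).continuousAt h1).continuousWithinAt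
  have hCD : ContDiffOn ℝ 1 Fh (Set.Ioi 0) := by
    have := (contDiffOn_succ_iff_deriv_of_isOpen (n := 0) (f := Fh)
      (s := Set.Ioi (0:ℝ)) isOpen_Ioi).mpr
      ⟨hdiff, by simp, contDiffOn_zero.mpr hcont'⟩
    simpa using this
  have hBpos : 0 < B := by
    have h1 : γt * A / lp * zinf ^ (-γt - lp) < 0 :=
      mul_neg_of_neg_of_pos (div_neg_of_neg_of_pos (mul_neg_of_neg_of_pos hγ2 hApos) hlppos)
        (Real.rpow_pos_of_pos hzpos _)
    rw [hB]; simp only [neg_mul, neg_div]; linarith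
  have hg1neg : ∀ z ∈ Set.Ioo 0 zinf, g1 z < 0 := by
    intro z hz
    have e : z ^ (lp - 1) = z ^ (lp + γt) * z ^ (-γt - 1) := by
      rw [← Real.rpow_add hz.1, show lp + γt + (-γt - 1) = lp - 1 by ring]
    have hu : 0 < z ^ (-γt - 1) := Real.rpow_pos_of_pos hz.1 _
    have hv : z ^ (lp + γt) < zinf ^ (lp + γt) :=
      Real.rpow_lt_rpow hz.1.le hz.2 hlg
    have h2 : lp * B * z ^ (lp + γt) < lp * B * zinf ^ (lp + γt) :=
      mul_lt_mul_of_pos_left hv (mul_pos hlppos hBpos)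
    have h3 : γt * A + lp * B * z ^ (lp + γt) < 0 := by
      rw [hkey] at h2; linarith
    have : g1 z = (γt * A + lp * B * z ^ (lp + γt)) * z ^ (-γt - 1) := by
      simp only [hg1def]; rw [e]; ring
    rw [this]
    exact mul_neg_of_neg_of_pos h3 hu
  have hderivneg : ∀ z ∈ Set.Ioo 0 zinf, deriv Fh z < 0 := by
    intro z hz; rw [hderivIoo z hz]; exact hg1neg z hz
  have hanti : StrictAntiOn g (Set.Ioc 0 zinf) := by
    refine strictAntiOn_of_deriv_neg (convex_Ioc _ _) ?_ ?_
    · intro w hw; exact (hgd w hw.1).continuousAt.continuousWithinAt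
    · intro w hw
      rw [interior_Ioc] at hw
      rw [(hgd w hw.1).deriv]
      exact hg1neg w hw
  have hFpos : ∀ z ∈ Set.Ioo 0 zinf, 0 < Fh z := by
    intro z hz
    have : g zinf < g z := hanti ⟨hz.1, hz.2.le⟩ ⟨hzpos, le_refl _⟩ hz.2
    rw [hgz] at this
    rw [hF z, if_pos hz.2]
    exact this
  have hode : ∀ z ∈ Set.Ioo 0 zinf,
      -(σ ^ 2 / 2 * z ^ 2 * deriv (deriv Fh) z + μ * z * deriv Fh z + ϑ * Fh z)
        = -(δ / 2) * z ^ (-γt) + 1 := by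
    intro z hz
    have hz0 : z ≠ 0 := hz.1.ne'
    have hd1 : deriv Fh z = g1 z := hderivIoo z hz
    have hd2 : deriv (deriv Fh) z = g2 z := by
      have hev : deriv Fh =ᶠ[nhds z] g1 := by
        filter_upwards [Ioo_mem_nhds hz.1 hz.2] with w hw
        exact hderivIoo w hw
      rw [hev.deriv_eq, (hg1d z hz.1).deriv]
    have hFz : Fh z = g z := by rw [hF z, if_pos hz.2]
    have hAQ : A * Q (-γt) = -(δ / 2) := by
      rw [hA]; field_simp
    rw [hQ] at hAQ
    have hrt := hroot
    rw [hQ] at hrt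
    have e1 : z ^ (-γt - 1) = z ^ (-γt) / z := by
      rw [Real.rpow_sub hz.1, Real.rpow_one]
    have e2 : z ^ (-γt - 2) = z ^ (-γt) / z ^ 2 := by
      rw [Real.rpow_sub hz.1, show (2:ℝ) = ((2:ℕ):ℝ) by norm_num, Real.rpow_natCast]
    have e3 : z ^ (lp - 1) = z ^ lp / z := by
      rw [Real.rpow_sub hz.1, Real.rpow_one]
    have e4 : z ^ (lp - 2) = z ^ lp / z ^ 2 := by
      rw [Real.rpow_sub hz.1, show (2:ℝ) = ((2:ℕ):ℝ) by norm_num, Real.rpow_natCast]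
    rw [hd1, hd2, hFz]
    simp only [hgdef, hg1def, hg2def]
    rw [e1, e2, e3, e4]
    field_simp
    linear_combination (2 * z ^ (-γt)) * hAQ - (2 * B * z ^ lp) * hrt
  exact ⟨hApos, hCD, hderivneg, hFpos, hode⟩
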